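/- Let λ₁ ≤ λ₂ = 0 < λ₃ ≤ λ₄ ≤ λ₅ ≤ λ₆ be real numbers with λ₁+⋯+λ₆ = 6H, H > 0, σ₅(λ) = 0, and ∑_{1≤i<j≤6}(λᵢ−λⱼ)²λᵢλⱼ ≤ 0. Then λ₁ = λ₂ = 0, λ₃ = λ₄ = λ₅ = λ₆ = (3/2)H, and R := (1/15)σ₂(λ) = (9/10)H². -/

import Mathlib

/-- the `r`-th elementary symmetric function -/
def esym {n : ℕ} (x : Fin n → ℝ) (r : ℕ) : ℝ :=
  ∑ t ∈ (Finset.univ : Finset (Fin n)).powersetCard r, ∏ i ∈ t, x i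

theorem stmt_15 (l : Fin 6 → ℝ) (H : ℝ)
    (h01 : l 0 ≤ l 1) (h1 : l 1 = 0) (h2 : 0 < l 2)
    (h23 : l 2 ≤ l 3) (h34 : l 3 ≤ l 4) (h45 : l 4 ≤ l 5)
    (hH : 0 < H) (hsum : ∑ i, l i = 6 * H)
    (hσ5 : esym l 5 = 0)
    (hSimons : ∑ i, ∑ j ∈ Finset.univ.filter (fun j => i < j),
      (l i - l j) ^ 2 * (l i * l j) ≤ 0) :
    l 0 = 0 ∧ l 1 = 0 ∧ l 2 = (3 / 2) * H ∧ l 3 = (3 / 2) * H ∧ l 4 = (3 / 2) * H ∧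
    l 5 = (3 / 2) * H ∧ (1 / 15) * esym l 2 = (9 / 10) * H ^ 2 := by
  have h3 : 0 < l 3 := lt_of_lt_of_le h2 h23
  have h4 : 0 < l 4 := lt_of_lt_of_le h3 h34
  have h5 : 0 < l 5 := lt_of_lt_of_le h4 h45
  -- expand esym l 5
  have e5 : esym l 5 =
      l 1*l 2*l 3*l 4*l 5 + l 0*l 2*l 3*l 4*l 5 + l 0*l 1*l 3*l 4*l 5 + l 0*l 1*l 2*l 4*l 5
      + l 0*l 1*l 2*l 3*l 5 + l 0*l 1*l 2*l 3*l 4 := by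
    rw [esym, show (Finset.univ : Finset (Fin 6)).powersetCard 5 =
      {{1,2,3,4,5},{0,2,3,4,5},{0,1,3,4,5},{0,1,2,4,5},{0,1,2,3,5},{0,1,2,3,4}} from by decide]
    simp (config := { decide := true }) only [Finset.sum_insert, Finset.sum_singleton,
      Finset.prod_insert, Finset.prod_singleton, Finset.mem_insert, Finset.mem_singleton]
    ring
  have hp : 0 < l 2 * l 3 * l 4 * l 5 := by positivity
  have h0 : l 0 = 0 := by
    rw [e5, h1] at hσ5
    have : l 0 * (l 2 * l 3 * l 4 * l 5) = 0 := by linarith [hσ5]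
    rcases mul_eq_zero.mp this with h | h
    · exact h
    · exact absurd h (ne_of_gt hp)
  -- expand Simons
  rw [Fin.sum_univ_six] at hSimons
  rw [show Finset.filter (fun j => (0:Fin 6) < j) Finset.univ = {1,2,3,4,5} from by decide,
    show Finset.filter (fun j => (1:Fin 6) < j) Finset.univ = {2,3,4,5} from by decide,
    show Finset.filter (fun j => (2:Fin 6) < j) Finset.univ = {3,4,5} from by decide,
    show Finset.filter (fun j => (3:Fin 6) < j) Finset.univ = {4,5} from by decide,
    show Finset.filter (fun j => (4:Fin 6) < j) Finset.univ = {5} from by decide,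
    show Finset.filter (fun j => (5:Fin 6) < j) Finset.univ = {} from by decide] at hSimons
  simp (config := { decide := true }) only [Finset.sum_insert, Finset.sum_singleton,
    Finset.mem_insert, Finset.mem_singleton, Finset.sum_empty] at hSimons
  rw [h0, h1] at hSimons
  -- nonnegativity of each remaining term
  have n23 : 0 ≤ (l 2 - l 3) ^ 2 * (l 2 * l 3) := mul_nonneg (sq_nonneg _) (mul_pos h2 h3).le
  have n24 : 0 ≤ (l 2 - l 4) ^ 2 * (l 2 * l 4) := mul_nonneg (sq_nonneg _) (mul_pos h2 h4).le
  have n25 : 0 ≤ (l 2 - l 5) ^ 2 * (l 2 * l 5) := mul_nonneg (sq_nonneg _) (mul_pos h2 h5).le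
  have n34 : 0 ≤ (l 3 - l 4) ^ 2 * (l 3 * l 4) := mul_nonneg (sq_nonneg _) (mul_pos h3 h4).le
  have n35 : 0 ≤ (l 3 - l 5) ^ 2 * (l 3 * l 5) := mul_nonneg (sq_nonneg _) (mul_pos h3 h5).le
  have n45 : 0 ≤ (l 4 - l 5) ^ 2 * (l 4 * l 5) := mul_nonneg (sq_nonneg _) (mul_pos h4 h5).le
  have eq : ∀ a b : ℝ, 0 < a → 0 < b → (a - b) ^ 2 * (a * b) = 0 → a = b := by
    intro a b ha hb hab
    rcases mul_eq_zero.mp hab with h | h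
    · have := pow_eq_zero_iff (n := 2) (by norm_num) |>.mp h
      linarith [sub_eq_zero.mp this]
    · exact absurd h (ne_of_gt (mul_pos ha hb))
  have z23 : (l 2 - l 3) ^ 2 * (l 2 * l 3) = 0 := le_antisymm (by linarith) n23
  have z34 : (l 3 - l 4) ^ 2 * (l 3 * l 4) = 0 := le_antisymm (by linarith) n34
  have z45 : (l 4 - l 5) ^ 2 * (l 4 * l 5) = 0 := le_antisymm (by linarith) n45
  have e23 := eq _ _ h2 h3 z23
  have e34 := eq _ _ h3 h4 z34
  have e45 := eq _ _ h4 h5 z45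
  rw [Fin.sum_univ_six] at hsum
  have v2 : l 2 = (3/2) * H := by rw [h0, h1] at hsum; linarith
  have v3 : l 3 = (3/2) * H := by rw [← e23]; exact v2
  have v4 : l 4 = (3/2) * H := by rw [← e34]; exact v3
  have v5 : l 5 = (3/2) * H := by rw [← e45]; exact v4
  refine ⟨h0, h1, v2, v3, v4, v5, ?_⟩
  have e2 : esym l 2 =
      l 0*l 1 + l 0*l 2 + l 0*l 3 + l 0*l 4 + l 0*l 5 + l 1*l 2 + l 1*l 3 + l 1*l 4 + l 1*l 5
      + l 2*l 3 + l 2*l 4 + l 2*l 5 + l 3*l 4 + l 3*l 5 + l 4*l 5 := by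
    rw [esym, show (Finset.univ : Finset (Fin 6)).powersetCard 2 =
      {{0,1},{0,2},{0,3},{0,4},{0,5},{1,2},{1,3},{1,4},{1,5},{2,3},{2,4},{2,5},{3,4},{3,5},{4,5}} from by decide]
    simp (config := { decide := true }) only [Finset.sum_insert, Finset.sum_singleton,
      Finset.prod_insert, Finset.prod_singleton, Finset.mem_insert, Finset.mem_singleton]
    ring
  rw [e2, h0, h1, v2, v3, v4, v5]; ring
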